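/- Let N ≥ 1, b ≥ 0 be integers, dist : Fin N → ℕ with dist i ≤ b for all i, and g : Fin N → ℝ an arbitrary gain function. Then the average of DCG(σ) over the finite nonempty set of all rankings σ compatible with dist equals ∑_{d=0}^{b} ( (∑_{i : dist i = d} g i) / n_d ) · ∑_{t = N_{d−1}+1}^{N_d} 1 / Real.logb 2 (t + 1), where summands with n_d = 0 contribute 0 and all quantities are cast to ℝ. -/

import Mathlib

theorem tie_aware_DCG
    (N b : ℕ) (hN : 1 ≤ N) (dist : Fin N → ℕ) (hdist : ∀ i, dist i ≤ b)
    (g : Fin N → ℝ) :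
    let n : ℕ → ℕ := fun d => (Finset.univ.filter (fun i : Fin N => dist i = d)).card
    -- `Ncum d = N_{d-1}` (sum over distances `j < d`)
    let Ncum : ℕ → ℕ := fun d => ∑ j ∈ Finset.range d, n j
    let DCG : Equiv.Perm (Fin N) → ℝ := fun σ =>
      ∑ k : Fin N, g (σ k) / Real.logb 2 ((k : ℕ) + 2)
    let Compat : Finset (Equiv.Perm (Fin N)) :=
      Finset.univ.filter (fun σ : Equiv.Perm (Fin N) => Monotone (fun k => dist (σ k)))
    (∑ σ ∈ Compat, DCG σ) / (Compat.card : ℝ) =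
      ∑ d ∈ Finset.range (b + 1),
        ((∑ i ∈ Finset.univ.filter (fun i : Fin N => dist i = d), g i) / (n d : ℝ)) *
          ∑ t ∈ Finset.Icc (Ncum d + 1) (Ncum (d + 1)), 1 / Real.logb 2 ((t : ℝ) + 1) := by
  intro n Ncum DCG Compat
  classical
  set w : Fin N → ℝ := fun k => 1 / Real.logb 2 ((k : ℕ) + 2) with hwdef
  set σ₀ : Equiv.Perm (Fin N) := Tuple.sort dist with hσ₀def
  set d₀ : Fin N → ℕ := fun k => dist (σ₀ k) with hd₀def
  have hmono : Monotone d₀ := Tuple.monotone_sort dist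
  set Stab : Finset (Equiv.Perm (Fin N)) :=
    Finset.univ.filter (fun π => ∀ k, d₀ (π k) = d₀ k) with hStabdef
  have hCompat_mem : ∀ σ : Equiv.Perm (Fin N),
      σ ∈ Compat ↔ Monotone (fun k => dist (σ k)) := by
    intro σ; simp [Compat]
  have hStab_mem : ∀ π : Equiv.Perm (Fin N),
      π ∈ Stab ↔ ∀ k, d₀ (π k) = d₀ k := by
    intro π; simp [hStabdef]
  have hσ₀mono : Monotone (fun k => dist (σ₀ k)) := Tuple.monotone_sort dist
  have hsorted : ∀ σ ∈ Compat, ∀ k, dist (σ k) = d₀ k := by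
    intro σ hσ k
    have h := Tuple.unique_monotone (f := dist) (σ := σ) (τ := σ₀)
      ((hCompat_mem σ).1 hσ) hσ₀mono
    exact congrFun h k
  have hequiv : ∀ σ : Equiv.Perm (Fin N), σ ∈ Compat ↔ σ₀⁻¹ * σ ∈ Stab := by
    intro σ
    rw [hCompat_mem, hStab_mem]
    constructor
    · intro h k
      have h1 : dist (σ k) = d₀ k := hsorted σ ((hCompat_mem σ).2 h) k
      simpa [hd₀def, Equiv.Perm.mul_apply, Equiv.Perm.coe_inv, Equiv.apply_symm_apply] using h1
    · intro h
      have hσ : ∀ k, dist (σ k) = d₀ k := by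
        intro k
        have h2 := h k
        simpa [hd₀def, Equiv.Perm.mul_apply, Equiv.Perm.coe_inv, Equiv.apply_symm_apply] using h2
      intro a a' haa'
      simp only [hσ]
      exact hmono haa'
  -- card transfer
  have hn_eq : ∀ d, n d = (Finset.univ.filter (fun k => d₀ k = d)).card := by
    intro d
    simp only [n]
    rw [← Fintype.card_subtype, ← Fintype.card_subtype]
    exact (Fintype.card_congr (σ₀.subtypeEquiv (fun a => Iff.rfl))).symm
  have hNcum : ∀ d, Ncum (d + 1) = Fintype.card {k // d₀ k ≤ d} := by
    intro d
    rw [Fintype.card_subtype,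
      Finset.card_eq_sum_card_fiberwise (f := d₀) (t := Finset.range (d + 1))
        (fun k hk => by
          simp at hk
          simp [Finset.mem_range, Nat.lt_succ_iff, hk])]
    simp only [Ncum]
    refine Finset.sum_congr rfl fun j hj => ?_
    rw [hn_eq j]
    congr 1
    ext k
    simp only [Finset.mem_filter, Finset.mem_univ, true_and]
    simp only [Finset.mem_range] at hj
    omega
  have hNle : ∀ d, Ncum d ≤ N := by
    intro d
    cases d with
    | zero => simp [Ncum]
    | succ e =>
      rw [hNcum e]
      simpa using Fintype.card_subtype_le (fun k : Fin N => d₀ k ≤ e)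
  have hlt : ∀ (d : ℕ) (k : Fin N), d₀ k < d ↔ (k : ℕ) < Ncum d := by
    intro d k
    cases d with
    | zero => simp [Ncum]
    | succ e =>
      rw [Nat.lt_succ_iff, hNcum e, Fintype.card_subtype]
      exact (Tuple.lt_card_le_iff_apply_le_of_monotone (f := d₀) (a := e) (j := k) hmono).symm
  have hfiber : ∀ (d : ℕ) (k : Fin N),
      d₀ k = d ↔ (Ncum d ≤ (k : ℕ) ∧ (k : ℕ) < Ncum (d + 1)) := by
    intro d k
    have h1 := hlt d k
    have h2 := hlt (d + 1) k
    omega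
  -- the sum of weights over a fiber equals the Icc sum
  have hS : ∀ d, ∑ k ∈ Finset.univ.filter (fun k => d₀ k = d), w k
      = ∑ t ∈ Finset.Icc (Ncum d + 1) (Ncum (d + 1)), 1 / Real.logb 2 ((t : ℝ) + 1) := by
    intro d
    refine Finset.sum_nbij' (i := fun k => (k : ℕ) + 1)
      (j := fun t => (⟨min (t - 1) (N - 1), by omega⟩ : Fin N)) ?_ ?_ ?_ ?_ ?_
    · intro k hk
      simp only [Finset.mem_filter, Finset.mem_univ, true_and] at hk
      have := (hfiber d k).1 hk
      simp only [Finset.mem_Icc]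
      omega
    · intro t ht
      simp only [Finset.mem_Icc] at ht
      have hle := hNle (d + 1)
      simp only [Finset.mem_filter, Finset.mem_univ, true_and]
      rw [hfiber d]
      simp only []
      omega
    · intro k hk
      have hk' : (k : ℕ) < N := k.isLt
      apply Fin.ext
      simp
      omega
    · intro t ht
      simp only [Finset.mem_Icc] at ht
      have hle := hNle (d + 1)
      simp
      omega
    · intro k hk
      have hcast : (((k : ℕ) + 1 : ℕ) : ℝ) + 1 = ((k : ℕ) : ℝ) + 2 := by push_cast; ring
      rw [hwdef]
      simp only []
      rw [hcast]
  -- counting lemma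
  have hcount : ∀ k₀ : Fin N,
      (n (d₀ k₀) : ℝ) * ∑ π ∈ Stab, w (π⁻¹ k₀)
        = (Stab.card : ℝ) * ∑ k ∈ Finset.univ.filter (fun k => d₀ k = d₀ k₀), w k := by
    intro k₀
    set F := Finset.univ.filter (fun k => d₀ k = d₀ k₀) with hF
    have hmaps : ∀ π ∈ Stab, π⁻¹ k₀ ∈ F := by
      intro π hπ
      have h := (hStab_mem π).1 hπ (π⁻¹ k₀)
      rw [show π (π⁻¹ k₀) = k₀ from π.apply_symm_apply k₀] at h
      simp [hF, h]
    set c := (Stab.filter (fun π => π⁻¹ k₀ = k₀)).card with hc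
    have hfib : ∀ k₁ ∈ F, (Stab.filter (fun π => π⁻¹ k₀ = k₁)).card = c := by
      intro k₁ hk₁
      have hd : d₀ k₁ = d₀ k₀ := by
        simpa [hF] using hk₁
      have hsw : ∀ k, d₀ (Equiv.swap k₀ k₁ k) = d₀ k := by
        intro k
        rcases eq_or_ne k k₀ with h | h
        · subst h; rw [Equiv.swap_apply_left]; exact hd
        rcases eq_or_ne k k₁ with h' | h'
        · subst h'; rw [Equiv.swap_apply_right]; exact hd.symm
        · rw [Equiv.swap_apply_of_ne_of_ne h h']
      have hmem : ∀ (π : Equiv.Perm (Fin N)), π ∈ Stab → π * Equiv.swap k₀ k₁ ∈ Stab := by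
        intro π hπ
        rw [hStab_mem] at hπ ⊢
        intro k
        rw [Equiv.Perm.mul_apply, hπ, hsw]
      refine Finset.card_nbij' (i := fun π => π * Equiv.swap k₀ k₁)
        (j := fun π => π * Equiv.swap k₀ k₁) ?_ ?_ ?_ ?_
      · intro π hπ
        simp only [Finset.mem_coe, Finset.mem_filter] at hπ ⊢
        refine ⟨hmem π hπ.1, ?_⟩
        rw [mul_inv_rev, Equiv.Perm.mul_apply, Equiv.swap_inv, hπ.2, Equiv.swap_apply_right]
      · intro π hπ
        simp only [Finset.mem_coe, Finset.mem_filter] at hπ ⊢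
        refine ⟨hmem π hπ.1, ?_⟩
        rw [mul_inv_rev, Equiv.Perm.mul_apply, Equiv.swap_inv, hπ.2, Equiv.swap_apply_left]
      · intro π _
        simp only [mul_assoc, Equiv.swap_mul_self, mul_one]
      · intro π _
        simp only [mul_assoc, Equiv.swap_mul_self, mul_one]
    have hsum : ∑ π ∈ Stab, w (π⁻¹ k₀) = ∑ k₁ ∈ F, (c : ℝ) * w k₁ := by
      rw [← Finset.sum_fiberwise_of_maps_to hmaps (fun π => w (π⁻¹ k₀))]
      refine Finset.sum_congr rfl fun k₁ hk₁ => ?_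
      have hin : ∑ π ∈ Stab.filter (fun π => π⁻¹ k₀ = k₁), w (π⁻¹ k₀)
          = ∑ π ∈ Stab.filter (fun π => π⁻¹ k₀ = k₁), w k₁ := by
        refine Finset.sum_congr rfl fun π hπ => ?_
        rw [(Finset.mem_filter.1 hπ).2]
      rw [hin, Finset.sum_const, nsmul_eq_mul, hfib k₁ hk₁]
    have hcard : Stab.card = F.card * c := by
      rw [Finset.card_eq_sum_card_fiberwise (f := fun π : Equiv.Perm (Fin N) => π⁻¹ k₀) (by intro π hπ; exact hmaps π hπ),
        Finset.sum_congr rfl hfib, Finset.sum_const, smul_eq_mul]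
    rw [hsum, ← Finset.mul_sum, hn_eq (d₀ k₀), ← hF, hcard]
    push_cast
    ring
  -- transfer the sum over Compat to a sum over Stab
  have hmemfwd : ∀ σ ∈ Compat, σ₀⁻¹ * σ ∈ Stab := fun σ h => (hequiv σ).1 h
  have hmembwd : ∀ π ∈ Stab, σ₀ * π ∈ Compat := by
    intro π hπ
    apply (hequiv _).2
    rw [inv_mul_cancel_left]
    exact hπ
  have hcardC : Compat.card = Stab.card :=
    Finset.card_nbij' (fun σ => σ₀⁻¹ * σ) (fun π => σ₀ * π) hmemfwd hmembwd
      (fun a _ => by simp only [mul_inv_cancel_left]) (fun a _ => by simp only [inv_mul_cancel_left])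
  have h1S : (1 : Equiv.Perm (Fin N)) ∈ Stab := by
    rw [hStab_mem]; intro k; rfl
  have hStabpos : (0 : ℝ) < (Stab.card : ℝ) := by
    exact_mod_cast Finset.card_pos.2 ⟨1, h1S⟩
  have step1 : ∑ σ ∈ Compat, DCG σ = ∑ π ∈ Stab, ∑ k : Fin N, g (σ₀ (π k)) * w k := by
    refine Finset.sum_nbij' (fun σ => σ₀⁻¹ * σ) (fun π => σ₀ * π) hmemfwd hmembwd
      (fun a _ => by simp only [mul_inv_cancel_left]) (fun a _ => by simp only [inv_mul_cancel_left]) ?_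
    intro σ hσ
    simp only [DCG]
    refine Finset.sum_congr rfl fun k _ => ?_
    rw [div_eq_mul_one_div]
    congr 1
    rw [Equiv.Perm.mul_apply, Equiv.Perm.coe_inv, Equiv.apply_symm_apply]
  have step2 : ∀ π ∈ Stab, ∑ k : Fin N, g (σ₀ (π k)) * w k
      = ∑ k : Fin N, g (σ₀ k) * w (π⁻¹ k) := by
    intro π _
    have h := Equiv.sum_comp π (fun j => g (σ₀ j) * w (π⁻¹ j))
    simpa [Equiv.Perm.coe_inv, Equiv.symm_apply_apply] using h
  have step3 : ∑ σ ∈ Compat, DCG σ = ∑ k : Fin N, g (σ₀ k) * ∑ π ∈ Stab, w (π⁻¹ k) := by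
    rw [step1, Finset.sum_congr rfl step2, Finset.sum_comm]
    exact Finset.sum_congr rfl fun k _ => (Finset.mul_sum _ _ _).symm
  have step4 : (∑ σ ∈ Compat, DCG σ) / (Compat.card : ℝ)
      = ∑ k : Fin N, g (σ₀ k) *
          ((∑ j ∈ Finset.univ.filter (fun j => d₀ j = d₀ k), w j) / (n (d₀ k) : ℝ)) := by
    rw [step3, hcardC, Finset.sum_div]
    refine Finset.sum_congr rfl fun k _ => ?_
    rw [mul_div_assoc]
    congr 1
    have hn0 : (0 : ℝ) < (n (d₀ k) : ℝ) := by
      rw [hn_eq]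
      exact_mod_cast Finset.card_pos.2 ⟨k, by simp⟩
    rw [div_eq_div_iff hStabpos.ne' hn0.ne']
    linear_combination hcount k
  rw [step4]
  have step5 : ∑ k : Fin N, g (σ₀ k) *
          ((∑ j ∈ Finset.univ.filter (fun j => d₀ j = d₀ k), w j) / (n (d₀ k) : ℝ))
      = ∑ i : Fin N, g i *
          ((∑ j ∈ Finset.univ.filter (fun j => d₀ j = dist i), w j) / (n (dist i) : ℝ)) :=
    Equiv.sum_comp σ₀ (fun i => g i *
      ((∑ j ∈ Finset.univ.filter (fun j => d₀ j = dist i), w j) / (n (dist i) : ℝ)))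
  rw [step5]
  rw [← Finset.sum_fiberwise_of_maps_to (t := Finset.range (b + 1))
    (fun i _ => Finset.mem_range.2 (Nat.lt_succ_of_le (hdist i)))
    (fun i => g i * ((∑ j ∈ Finset.univ.filter (fun j => d₀ j = dist i), w j) / (n (dist i) : ℝ)))]
  refine Finset.sum_congr rfl fun d hd => ?_
  have hinner : ∑ i ∈ Finset.univ.filter (fun i => dist i = d),
      g i * ((∑ j ∈ Finset.univ.filter (fun j => d₀ j = dist i), w j) / (n (dist i) : ℝ))
      = ∑ i ∈ Finset.univ.filter (fun i => dist i = d),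
      g i * ((∑ j ∈ Finset.univ.filter (fun j => d₀ j = d), w j) / (n d : ℝ)) := by
    refine Finset.sum_congr rfl fun i hi => ?_
    rw [(Finset.mem_filter.1 hi).2]
  rw [hinner, ← Finset.sum_mul, hS d]
  ring
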